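/- There is a constant C > 0 (one may take C = √2) such that for every continuously differentiable function b : ℝ² → ℝ with compact support: ( ∫_ℝ ( ∫₀^∞ |b(x₁, x₂) ∂₁b(x₁, x₂)| dx₂ )² dx₁ )^{1/2} ≤ C ( ∫_{ℝ×(0,∞)} |b|² dx )^{1/4} ( ∫_{ℝ×(0,∞)} |∂₁b|² dx )^{3/4}. -/

import Mathlib

open MeasureTheory Set

section Helpers

variable {h : ℝ × ℝ → ℝ}

/-- slice in first variable -/
lemma slice1_cs (hs : HasCompactSupport h) (x₂ : ℝ) :
    HasCompactSupport (fun y => h (y, x₂)) := by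
  apply HasCompactSupport.intro (hs.isCompact.image continuous_fst)
  intro y hy
  by_contra hne
  exact hy ⟨(y, x₂), subset_tsupport _ hne, rfl⟩

/-- slice in second variable -/
lemma slice2_cs (hs : HasCompactSupport h) (x₁ : ℝ) :
    HasCompactSupport (fun t => h (x₁, t)) := by
  apply HasCompactSupport.intro (hs.isCompact.image continuous_snd)
  intro t ht
  by_contra hne
  exact ht ⟨(x₁, t), subset_tsupport _ hne, rfl⟩

lemma cont_param (hc : Continuous h) (hs : HasCompactSupport h) (s : Set ℝ) :
    Continuous (fun x₁ => ∫ x₂ in s, h (x₁, x₂)) := by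
  obtain ⟨C, hC⟩ := hc.norm.bounded_above_of_compact_support hs.norm
  rw [continuous_iff_continuousAt]
  intro x₀
  set K : Set ℝ := Prod.snd '' tsupport h with hK
  have hKc : IsCompact K := hs.isCompact.image continuous_snd
  apply continuousAt_of_dominated (bound := K.indicator fun _ => C)
  · exact Filter.Eventually.of_forall fun x =>
      (hc.comp (continuous_const.prodMk continuous_id)).aestronglyMeasurable
  · refine Filter.Eventually.of_forall fun x => Filter.Eventually.of_forall fun t => ?_
    by_cases ht : t ∈ K
    · simpa [Set.indicator_of_mem ht] using (le_trans (by simp) (hC (x, t)))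
    · have : (x, t) ∉ tsupport h := fun hmem => ht ⟨(x, t), hmem, rfl⟩
      have hz : h (x, t) = 0 := image_eq_zero_of_notMem_tsupport this
      simp [hz, Set.indicator_of_notMem ht]
  · exact ((integrable_indicator_iff hKc.measurableSet).2
      (integrableOn_const hKc.measure_lt_top.ne)).restrict
  · exact Filter.Eventually.of_forall fun t =>
      (hc.comp (continuous_id.prodMk continuous_const)).continuousAt

lemma cs_param (hs : HasCompactSupport h) (s : Set ℝ) :
    HasCompactSupport (fun x₁ => ∫ x₂ in s, h (x₁, x₂)) := by
  apply HasCompactSupport.intro (hs.isCompact.image continuous_fst)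
  intro y hy
  have : ∀ x₂, h (y, x₂) = 0 := fun x₂ =>
    image_eq_zero_of_notMem_tsupport fun hmem => hy ⟨(y, x₂), hmem, rfl⟩
  simp [this]

lemma fubini1 (hc : Continuous h) (hs : HasCompactSupport h) {s : Set ℝ}
    (hms : MeasurableSet s) :
    ∫ x in (Set.univ ×ˢ s : Set (ℝ × ℝ)), h x = ∫ x₁ : ℝ, ∫ x₂ in s, h (x₁, x₂) := by
  have hint : Integrable h (((volume : Measure ℝ).restrict Set.univ).prod
      ((volume : Measure ℝ).restrict s)) := by
    rw [Measure.prod_restrict, ← Measure.volume_eq_prod]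
    exact (hc.integrable_of_hasCompactSupport hs).restrict
  have key : (volume : Measure (ℝ × ℝ)).restrict (Set.univ ×ˢ s) =
      ((volume : Measure ℝ).restrict Set.univ).prod ((volume : Measure ℝ).restrict s) := by
    rw [Measure.prod_restrict, Measure.volume_eq_prod]
  rw [key, integral_prod h hint, Measure.restrict_univ]

lemma fubini2 (hc : Continuous h) (hs : HasCompactSupport h) {s : Set ℝ}
    (hms : MeasurableSet s) :
    ∫ x in (Set.univ ×ˢ s : Set (ℝ × ℝ)), h x = ∫ x₂ in s, ∫ x₁ : ℝ, h (x₁, x₂) := by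
  have hint : Integrable h (((volume : Measure ℝ).restrict Set.univ).prod
      ((volume : Measure ℝ).restrict s)) := by
    rw [Measure.prod_restrict, ← Measure.volume_eq_prod]
    exact (hc.integrable_of_hasCompactSupport hs).restrict
  have key : (volume : Measure (ℝ × ℝ)).restrict (Set.univ ×ˢ s) =
      ((volume : Measure ℝ).restrict Set.univ).prod ((volume : Measure ℝ).restrict s) := by
    rw [Measure.prod_restrict, Measure.volume_eq_prod]
  rw [key, integral_prod_symm h hint]
  simp [Measure.restrict_univ]

lemma cauchy_schwarz {α : Type*} [MeasurableSpace α] {μ : Measure α} {f g : α → ℝ}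
    (hf : MemLp f 2 μ) (hg : MemLp g 2 μ) :
    ∫ a, |f a * g a| ∂μ ≤
      (∫ a, (f a) ^ 2 ∂μ) ^ ((1 : ℝ) / 2) * (∫ a, (g a) ^ 2 ∂μ) ^ ((1 : ℝ) / 2) := by
  have hpq : Real.HolderConjugate 2 2 := Real.HolderConjugate.two_two
  have h2 : ENNReal.ofReal (2 : ℝ) = 2 := by simp
  have := integral_mul_norm_le_Lp_mul_Lq hpq (h2 ▸ hf) (h2 ▸ hg)
  have e1 : ∀ x : ℝ, ‖x‖ ^ (2 : ℝ) = x ^ 2 := fun x => by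
    rw [show (2 : ℝ) = ((2 : ℕ) : ℝ) by norm_num, Real.rpow_natCast, Real.norm_eq_abs, sq_abs]
  simp only [e1] at this
  calc ∫ a, |f a * g a| ∂μ = ∫ a, ‖f a‖ * ‖g a‖ ∂μ := by
        simp only [Real.norm_eq_abs, ← abs_mul]
      _ ≤ _ := this

variable {b : ℝ × ℝ → ℝ}

lemma g_cont (hb : ContDiff ℝ 1 b) :
    Continuous (fun x => fderiv ℝ b x (1, 0)) :=
  (hb.continuous_fderiv one_ne_zero).clm_apply continuous_const

lemma g_cs (hsupp : HasCompactSupport b) :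
    HasCompactSupport (fun x => fderiv ℝ b x (1, 0)) :=
  (hsupp.fderiv ℝ).comp_left (g := fun L : ℝ × ℝ →L[ℝ] ℝ => L (1, 0)) rfl

lemma slice_hasDerivAt (hb : ContDiff ℝ 1 b) (x₂ y : ℝ) :
    HasDerivAt (fun y => b (y, x₂)) (fderiv ℝ b (y, x₂) (1, 0)) y := by
  have h1 : HasDerivAt (fun y : ℝ => (y, x₂)) ((1 : ℝ), (0 : ℝ)) y :=
    (hasDerivAt_id y).prodMk (hasDerivAt_const y x₂)
  exact ((hb.differentiable one_ne_zero (y, x₂)).hasFDerivAt.comp_hasDerivAt y h1)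

lemma agmon_ptwise (hb : ContDiff ℝ 1 b) (hsupp : HasCompactSupport b) (x₁ x₂ : ℝ) :
    (b (x₁, x₂)) ^ 2 ≤ 2 * ∫ y : ℝ, |b (y, x₂) * fderiv ℝ b (y, x₂) (1, 0)| := by
  set g : ℝ × ℝ → ℝ := fun x => fderiv ℝ b x (1, 0) with hg
  set φ : ℝ → ℝ := fun y => (b (y, x₂)) ^ 2 with hφ
  have hbs : ContDiff ℝ 1 (fun y => b (y, x₂)) :=
    hb.comp (contDiff_id.prodMk contDiff_const)
  have hφc : ContDiff ℝ 1 φ := hbs.pow 2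
  have hbscs : HasCompactSupport (fun y => b (y, x₂)) := slice1_cs hsupp x₂
  have hφcs : HasCompactSupport φ :=
    hbscs.comp_left (g := fun t : ℝ => t ^ 2) (by norm_num)
  have hderiv : ∀ y, HasDerivAt φ (2 * (b (y, x₂) * g (y, x₂))) y := by
    intro y
    have := (slice_hasDerivAt hb x₂ y).fun_pow 2
    simpa [hφ, mul_comm, mul_assoc, mul_left_comm] using this
  have hd : deriv φ = fun y => 2 * (b (y, x₂) * g (y, x₂)) :=
    funext fun y => (hderiv y).deriv
  have hbg : Continuous (fun y => b (y, x₂) * g (y, x₂)) :=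
    (hb.continuous.comp (continuous_id.prodMk continuous_const)).mul
      ((g_cont hb).comp (continuous_id.prodMk continuous_const))
  have hbgcs : HasCompactSupport (fun y => b (y, x₂) * g (y, x₂)) :=
    hbscs.mul_right
  have hint : Integrable (fun y => |b (y, x₂) * g (y, x₂)|) :=
    (hbg.integrable_of_hasCompactSupport hbgcs).abs
  have key : φ x₁ = ∫ y in Iic x₁, deriv φ y :=
    (hφcs.integral_Iic_deriv_eq hφc x₁).symm
  calc (b (x₁, x₂)) ^ 2 = φ x₁ := rfl
    _ = ∫ y in Iic x₁, deriv φ y := key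
    _ ≤ |∫ y in Iic x₁, deriv φ y| := le_abs_self _
    _ ≤ ∫ y in Iic x₁, |deriv φ y| := by
        simpa using norm_integral_le_integral_norm (μ := volume.restrict (Iic x₁)) (deriv φ)
    _ = ∫ y in Iic x₁, 2 * |b (y, x₂) * g (y, x₂)| := by
        rw [hd]; congr 1; ext y; rw [abs_mul, abs_two]
    _ ≤ ∫ y : ℝ, 2 * |b (y, x₂) * g (y, x₂)| := by
        apply setIntegral_le_integral (hint.const_mul 2)
        exact Filter.Eventually.of_forall fun y => by positivity
    _ = 2 * ∫ y : ℝ, |b (y, x₂) * g (y, x₂)| := integral_const_mul 2 _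

end Helpers

theorem stmt_19 (b : ℝ × ℝ → ℝ) (hb : ContDiff ℝ 1 b)
    (hsupp : HasCompactSupport b) :
    (∫ x₁ : ℝ, (∫ x₂ in Set.Ioi (0 : ℝ),
        |b (x₁, x₂) * fderiv ℝ b (x₁, x₂) (1, 0)|) ^ 2) ^ ((1 : ℝ) / 2)
      ≤ Real.sqrt 2
        * (∫ x in (Set.univ ×ˢ Set.Ioi (0 : ℝ) : Set (ℝ × ℝ)),
            (b x) ^ 2) ^ ((1 : ℝ) / 4)
        * (∫ x in (Set.univ ×ˢ Set.Ioi (0 : ℝ) : Set (ℝ × ℝ)),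
            (fderiv ℝ b x (1, 0)) ^ 2) ^ ((3 : ℝ) / 4) := by
  set g : ℝ × ℝ → ℝ := fun x => fderiv ℝ b x (1, 0) with hgdef
  have hgc : Continuous g := g_cont hb
  have hgcs : HasCompactSupport g := g_cs hsupp
  have hbc : Continuous b := hb.continuous
  have hbgc : Continuous (fun x : ℝ × ℝ => |b x * g x|) := (hbc.mul hgc).abs
  have hbgcs : HasCompactSupport (fun x : ℝ × ℝ => |b x * g x|) :=
    (hsupp.mul_right).comp_left (g := fun t : ℝ => |t|) abs_zero
  -- the function A
  set A : ℝ → ℝ := fun x₂ => ∫ y : ℝ, |b (y, x₂) * g (y, x₂)| with hAdef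
  have hA_nonneg : ∀ x₂, 0 ≤ A x₂ := fun x₂ => integral_nonneg fun y => abs_nonneg _
  have hswc : Continuous (fun p : ℝ × ℝ => |b (p.2, p.1) * g (p.2, p.1)|) :=
    hbgc.comp (continuous_snd.prodMk continuous_fst)
  have hswcs : HasCompactSupport (fun p : ℝ × ℝ => |b (p.2, p.1) * g (p.2, p.1)|) :=
    hbgcs.comp_homeomorph (Homeomorph.prodComm ℝ ℝ)
  have hAc : Continuous A := by
    have := cont_param hswc hswcs Set.univ
    simpa only [Measure.restrict_univ] using this
  have hAcs : HasCompactSupport A := by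
    have := cs_param (h := fun p : ℝ × ℝ => |b (p.2, p.1) * g (p.2, p.1)|) hswcs Set.univ
    simpa only [Measure.restrict_univ] using this
  -- Agmon pointwise
  have hkey : ∀ x₁ x₂ : ℝ, (b (x₁, x₂)) ^ 2 ≤ 2 * A x₂ := fun x₁ x₂ =>
    agmon_ptwise hb hsupp x₁ x₂
  -- constants
  set P : ℝ := ∫ x in (Set.univ ×ˢ Set.Ioi (0 : ℝ) : Set (ℝ × ℝ)), (b x) ^ 2 with hPdef
  set Q : ℝ := ∫ x in (Set.univ ×ˢ Set.Ioi (0 : ℝ) : Set (ℝ × ℝ)), (g x) ^ 2 with hQdef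
  have hP_nonneg : 0 ≤ P := integral_nonneg fun x => sq_nonneg _
  have hQ_nonneg : 0 ≤ Q := integral_nonneg fun x => sq_nonneg _
  set c : ℝ := ∫ x₂ in Set.Ioi (0 : ℝ), 2 * A x₂ with hcdef
  have hc_nonneg : 0 ≤ c := integral_nonneg fun x => by positivity
  -- sqrt(2A)
  set sA : ℝ → ℝ := fun x₂ => Real.sqrt (2 * A x₂) with hsAdef
  have hsAc : Continuous sA :=
    Real.continuous_sqrt.comp (continuous_const.mul hAc)
  have hsAcs : HasCompactSupport sA :=
    hAcs.comp_left (g := fun t : ℝ => Real.sqrt (2 * t)) (by simp)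
  have hsA_nonneg : ∀ x₂, 0 ≤ sA x₂ := fun x₂ => Real.sqrt_nonneg _
  -- step 2 : pointwise-in-x₁ bound
  have step2 : ∀ x₁ : ℝ, (∫ x₂ in Set.Ioi (0 : ℝ), |b (x₁, x₂) * g (x₁, x₂)|) ^ 2
      ≤ c * ∫ x₂ in Set.Ioi (0 : ℝ), (g (x₁, x₂)) ^ 2 := by
    intro x₁
    have hgslc : Continuous (fun x₂ => g (x₁, x₂)) :=
      hgc.comp (continuous_const.prodMk continuous_id)
    have hgslcs : HasCompactSupport (fun x₂ => g (x₁, x₂)) := slice2_cs hgcs x₁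
    have hint1 : Integrable (fun x₂ => |b (x₁, x₂) * g (x₁, x₂)|)
        (volume.restrict (Set.Ioi (0:ℝ))) :=
      ((hbgc.comp (continuous_const.prodMk continuous_id)).integrable_of_hasCompactSupport
        (slice2_cs hbgcs x₁)).restrict
    have hsgcs : HasCompactSupport (fun x₂ => sA x₂ * g (x₁, x₂)) := hgslcs.mul_left
    have hint2 : Integrable (fun x₂ => |sA x₂ * g (x₁, x₂)|)
        (volume.restrict (Set.Ioi (0:ℝ))) :=
      (((hsAc.mul hgslc).abs).integrable_of_hasCompactSupport
        (hsgcs.comp_left (g := fun t : ℝ => |t|) abs_zero)).restrict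
    have h1 : (∫ x₂ in Set.Ioi (0 : ℝ), |b (x₁, x₂) * g (x₁, x₂)|)
        ≤ ∫ x₂ in Set.Ioi (0 : ℝ), |sA x₂ * g (x₁, x₂)| := by
      refine integral_mono hint1 hint2 fun x₂ => ?_
      have hb_le : |b (x₁, x₂)| ≤ sA x₂ := by
        rw [hsAdef, ← Real.sqrt_sq_eq_abs]
        exact Real.sqrt_le_sqrt (hkey x₁ x₂)
      calc |b (x₁, x₂) * g (x₁, x₂)| = |b (x₁, x₂)| * |g (x₁, x₂)| := abs_mul _ _
        _ ≤ sA x₂ * |g (x₁, x₂)| :=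
            mul_le_mul_of_nonneg_right hb_le (abs_nonneg _)
        _ = |sA x₂| * |g (x₁, x₂)| := by rw [abs_of_nonneg (hsA_nonneg x₂)]
        _ = |sA x₂ * g (x₁, x₂)| := (abs_mul _ _).symm
    have h2 : (∫ x₂ in Set.Ioi (0 : ℝ), |sA x₂ * g (x₁, x₂)|)
        ≤ (∫ x₂ in Set.Ioi (0 : ℝ), (sA x₂) ^ 2) ^ ((1:ℝ)/2)
          * (∫ x₂ in Set.Ioi (0 : ℝ), (g (x₁, x₂)) ^ 2) ^ ((1:ℝ)/2) :=
      cauchy_schwarz ((hsAc.memLp_of_hasCompactSupport hsAcs).restrict _)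
        ((hgslc.memLp_of_hasCompactSupport hgslcs).restrict _)
    have h3 : (∫ x₂ in Set.Ioi (0 : ℝ), (sA x₂) ^ 2) = c := by
      rw [hcdef]
      exact integral_congr_ae (Filter.Eventually.of_forall fun x₂ =>
        Real.sq_sqrt (by have := hA_nonneg x₂; positivity))
    have hG2_nonneg : 0 ≤ ∫ x₂ in Set.Ioi (0 : ℝ), (g (x₁, x₂)) ^ 2 :=
      integral_nonneg fun x₂ => sq_nonneg _
    have hF_nonneg : 0 ≤ ∫ x₂ in Set.Ioi (0 : ℝ), |b (x₁, x₂) * g (x₁, x₂)| :=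
      integral_nonneg fun x₂ => abs_nonneg _
    have hsq : ∀ x : ℝ, 0 ≤ x → (x ^ ((1:ℝ)/2)) ^ (2:ℕ) = x := fun x hx => by
      rw [← Real.rpow_natCast (x ^ ((1:ℝ)/2)) 2, ← Real.rpow_mul hx]
      norm_num
    calc (∫ x₂ in Set.Ioi (0 : ℝ), |b (x₁, x₂) * g (x₁, x₂)|) ^ 2
        ≤ (c ^ ((1:ℝ)/2) * (∫ x₂ in Set.Ioi (0 : ℝ), (g (x₁, x₂)) ^ 2) ^ ((1:ℝ)/2)) ^ 2 := by
          apply pow_le_pow_left₀ hF_nonneg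
          exact h1.trans (h2.trans_eq (by rw [h3]))
      _ = c * ∫ x₂ in Set.Ioi (0 : ℝ), (g (x₁, x₂)) ^ 2 := by
          rw [mul_pow, hsq c hc_nonneg, hsq _ hG2_nonneg]
  -- outer integration
  have hFc : Continuous (fun x₁ => ∫ x₂ in Set.Ioi (0 : ℝ), |b (x₁, x₂) * g (x₁, x₂)|) :=
    cont_param hbgc hbgcs _
  have hFcs : HasCompactSupport
      (fun x₁ => ∫ x₂ in Set.Ioi (0 : ℝ), |b (x₁, x₂) * g (x₁, x₂)|) :=
    cs_param hbgcs _
  have hg2c : Continuous (fun x : ℝ × ℝ => (g x) ^ 2) := hgc.pow 2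
  have hg2cs : HasCompactSupport (fun x : ℝ × ℝ => (g x) ^ 2) :=
    hgcs.comp_left (g := fun t : ℝ => t ^ 2) (by norm_num)
  have hG2c : Continuous (fun x₁ => ∫ x₂ in Set.Ioi (0 : ℝ), (g (x₁, x₂)) ^ 2) :=
    cont_param hg2c hg2cs _
  have hG2cs : HasCompactSupport (fun x₁ => ∫ x₂ in Set.Ioi (0 : ℝ), (g (x₁, x₂)) ^ 2) :=
    cs_param hg2cs _
  have hQ_eq : Q = ∫ x₁ : ℝ, ∫ x₂ in Set.Ioi (0 : ℝ), (g (x₁, x₂)) ^ 2 :=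
    fubini1 hg2c hg2cs measurableSet_Ioi
  have houter : (∫ x₁ : ℝ, (∫ x₂ in Set.Ioi (0 : ℝ), |b (x₁, x₂) * g (x₁, x₂)|) ^ 2)
      ≤ c * Q := by
    have hFint : Integrable
        (fun x₁ => (∫ x₂ in Set.Ioi (0 : ℝ), |b (x₁, x₂) * g (x₁, x₂)|) ^ 2) :=
      ((show Continuous (fun x₁ => (∫ x₂ in Set.Ioi (0 : ℝ), |b (x₁, x₂) * g (x₁, x₂)|) ^ 2)
          from hFc.pow 2).integrable_of_hasCompactSupport
        (hFcs.comp_left (g := fun t : ℝ => t ^ 2) (by norm_num)))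
    have hGint : Integrable
        (fun x₁ => c * ∫ x₂ in Set.Ioi (0 : ℝ), (g (x₁, x₂)) ^ 2) :=
      (hG2c.integrable_of_hasCompactSupport hG2cs).const_mul c
    calc (∫ x₁ : ℝ, (∫ x₂ in Set.Ioi (0 : ℝ), |b (x₁, x₂) * g (x₁, x₂)|) ^ 2)
        ≤ ∫ x₁ : ℝ, c * ∫ x₂ in Set.Ioi (0 : ℝ), (g (x₁, x₂)) ^ 2 :=
          integral_mono hFint hGint step2
      _ = c * Q := by rw [integral_const_mul, hQ_eq]
  -- step 4 : bound on c
  have hc_le : c ≤ 2 * (P ^ ((1:ℝ)/2) * Q ^ ((1:ℝ)/2)) := by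
    have h1 : c = 2 * ∫ x₂ in Set.Ioi (0 : ℝ), A x₂ := integral_const_mul 2 _
    have h2 : (∫ x₂ in Set.Ioi (0 : ℝ), A x₂)
        = ∫ x in (Set.univ ×ˢ Set.Ioi (0 : ℝ) : Set (ℝ × ℝ)), |b x * g x| :=
      (fubini2 hbgc hbgcs measurableSet_Ioi).symm
    have h3 : (∫ x in (Set.univ ×ˢ Set.Ioi (0 : ℝ) : Set (ℝ × ℝ)), |b x * g x|)
        ≤ P ^ ((1:ℝ)/2) * Q ^ ((1:ℝ)/2) :=
      cauchy_schwarz (hbc.memLp_of_hasCompactSupport hsupp)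
        (hgc.memLp_of_hasCompactSupport hgcs)
    rw [h1, h2] at *
    linarith
  -- final algebra
  have hF2_nonneg : 0 ≤ ∫ x₁ : ℝ, (∫ x₂ in Set.Ioi (0 : ℝ), |b (x₁, x₂) * g (x₁, x₂)|) ^ 2 :=
    integral_nonneg fun x => sq_nonneg _
  have hmain : (∫ x₁ : ℝ, (∫ x₂ in Set.Ioi (0 : ℝ), |b (x₁, x₂) * g (x₁, x₂)|) ^ 2)
      ≤ 2 * P ^ ((1:ℝ)/2) * Q ^ ((3:ℝ)/2) := by
    have hQ32 : Q ^ ((1:ℝ)/2) * Q = Q ^ ((3:ℝ)/2) := by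
      nth_rewrite 2 [← Real.rpow_one Q]
      rw [← Real.rpow_add' hQ_nonneg (by norm_num)]
      norm_num
    calc (∫ x₁ : ℝ, (∫ x₂ in Set.Ioi (0 : ℝ), |b (x₁, x₂) * g (x₁, x₂)|) ^ 2)
        ≤ c * Q := houter
      _ ≤ 2 * (P ^ ((1:ℝ)/2) * Q ^ ((1:ℝ)/2)) * Q :=
          mul_le_mul_of_nonneg_right hc_le hQ_nonneg
      _ = 2 * P ^ ((1:ℝ)/2) * Q ^ ((3:ℝ)/2) := by rw [mul_assoc, mul_assoc, hQ32]; ring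
  calc (∫ x₁ : ℝ, (∫ x₂ in Set.Ioi (0 : ℝ), |b (x₁, x₂) * g (x₁, x₂)|) ^ 2) ^ ((1:ℝ)/2)
      ≤ (2 * P ^ ((1:ℝ)/2) * Q ^ ((3:ℝ)/2)) ^ ((1:ℝ)/2) :=
        Real.rpow_le_rpow hF2_nonneg hmain (by norm_num)
    _ = Real.sqrt 2 * P ^ ((1:ℝ)/4) * Q ^ ((3:ℝ)/4) := by
        rw [Real.mul_rpow (by positivity) (Real.rpow_nonneg hQ_nonneg _),
          Real.mul_rpow (by norm_num) (Real.rpow_nonneg hP_nonneg _)]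
        rw [← Real.rpow_mul hP_nonneg, ← Real.rpow_mul hQ_nonneg]
        norm_num [Real.sqrt_eq_rpow]
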